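/- Every group acting freely by homeomorphisms on the real line is isomorphic to a subgroup of (ℝ, +). In particular, such a group is abelian and torsion-free. -/

import Mathlib

open Set MeasureTheory
open scoped NNReal

/-- Orientation-preserving homeomorphisms of ℝ, modelled as order-isomorphisms of ℝ
(every order-isomorphism of ℝ is a strictly increasing homeomorphism and conversely). -/
abbrev HomeoR := ℝ ≃o ℝ

/-- The fixed point set of `f`. -/
def FixSet (f : HomeoR) : Set ℝ := {x : ℝ | f x = x}

/-- `f` and `g` are crossed with `f` in the distinguished role: there is an interval
`(a,b)` with endpoints possibly `±∞` such that `Fix(f) ∩ [a,b] = {a,b}` while `g`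
maps `a` or `b` into `(a,b)`. -/
def CrossedAt (f g : HomeoR) : Prop :=
  ∃ a b : EReal, a < b ∧
    ({x : ℝ | a ≤ (x : EReal) ∧ (x : EReal) ≤ b} ∩ FixSet f
      = {x : ℝ | (x : EReal) = a ∨ (x : EReal) = b}) ∧
    (∃ x : ℝ, ((x : EReal) = a ∨ (x : EReal) = b) ∧
      a < (g x : EReal) ∧ (g x : EReal) < b)

/-- Two elements are crossed. -/
def Crossed (f g : HomeoR) : Prop := CrossedAt f g ∨ CrossedAt g f

/-- `μ` is a (nonzero) `G`-invariant Radon measure on ℝ. -/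
def InvariantRadon (G : Subgroup HomeoR) (μ : Measure ℝ) : Prop :=
  μ ≠ 0 ∧ IsFiniteMeasureOnCompacts μ ∧ ∀ g ∈ G, Measure.map (⇑g) μ = μ

/-- `Λ` is a nonempty minimal closed `G`-invariant subset of ℝ. -/
def MinimalSet (G : Subgroup HomeoR) (Λ : Set ℝ) : Prop :=
  Λ.Nonempty ∧ IsClosed Λ ∧ (∀ g ∈ G, ⇑g '' Λ = Λ) ∧
    ∀ Λ' ⊆ Λ, Λ'.Nonempty → IsClosed Λ' → (∀ g ∈ G, ⇑g '' Λ' = Λ') → Λ' = Λ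


open Set Filter Topology

section HolderAux

variable {G : Type*} [Group G] [MulAction G ℝ]

/-- A continuous function on ℝ with no zero has constant sign. -/
lemma holder_sign_const {F : ℝ → ℝ} (hF : Continuous F) (h0 : ∀ x, F x ≠ 0)
    {a : ℝ} (ha : 0 < F a) : ∀ x, 0 < F x := by
  intro x
  by_contra hx
  have hx' : F x < 0 := lt_of_le_of_ne (not_lt.1 hx) (h0 x)
  rcases le_total a x with hax | hxa
  · obtain ⟨z, _, hz⟩ := intermediate_value_Icc' hax hF.continuousOn
      (by constructor <;> [exact hx'.le; exact ha.le] : (0:ℝ) ∈ Icc (F x) (F a))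
    exact h0 z hz
  · obtain ⟨z, _, hz⟩ := intermediate_value_Icc hxa hF.continuousOn
      (by constructor <;> [exact hx'.le; exact ha.le] : (0:ℝ) ∈ Icc (F x) (F a))
    exact h0 z hz

variable (hcont : ∀ g : G, Continuous (fun x : ℝ => g • x))
  (hfree : ∀ g : G, g ≠ 1 → ∀ x : ℝ, g • x ≠ x)

include hfree in
lemma holder_fix {g : G} {x : ℝ} (h : g • x = x) : g = 1 := by
  by_contra hg; exact hfree g hg x h

include hcont hfree in
/-- Globalization: comparison at one point gives comparison everywhere (strict). -/
lemma holder_glob_lt {g h : G} (hlt : g • (0:ℝ) < h • (0:ℝ)) : ∀ x : ℝ, g • x < h • x := by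
  have hne : g ≠ h := by rintro rfl; exact lt_irrefl _ hlt
  set F : ℝ → ℝ := fun x => h • x - g • x with hFdef
  have hFc : Continuous F := (hcont h).sub (hcont g)
  have hF0 : ∀ x, F x ≠ 0 := by
    intro x hx
    have : h • x = g • x := by have := sub_eq_zero.1 hx; linarith [this]
    have : (g⁻¹ * h) • x = x := by
      rw [mul_smul, this, inv_smul_smul]
    have := holder_fix hfree this
    exact hne (inv_mul_eq_one.1 this)
  have ha : 0 < F 0 := sub_pos.2 hlt
  intro x
  have := holder_sign_const hFc hF0 ha x
  simpa [hFdef, sub_pos] using this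

include hcont hfree in
lemma holder_glob_le {g h : G} (hle : g • (0:ℝ) ≤ h • (0:ℝ)) : ∀ x : ℝ, g • x ≤ h • x := by
  rcases eq_or_lt_of_le hle with heq | hlt
  · intro x
    have : (g⁻¹ * h) • (0:ℝ) = 0 := by rw [mul_smul, ← heq, inv_smul_smul]
    have h1 : g⁻¹ * h = 1 := holder_fix hfree this
    rw [inv_mul_eq_one.1 h1]
  · exact fun x => (holder_glob_lt hcont hfree hlt x).le

include hcont hfree in
lemma holder_pos_all {g : G} (h : 0 < g • (0:ℝ)) : ∀ x : ℝ, x < g • x := by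
  intro x
  have := holder_glob_lt hcont hfree (g := 1) (h := g) (by simpa using h) x
  simpa using this

include hcont hfree in
lemma holder_mono (g : G) : StrictMono (fun x : ℝ => g • x) := by
  rcases (hcont g).strictMono_of_inj (MulAction.injective g) with h | h
  · exact h
  · exfalso
    have hg : g ≠ 1 := by
      rintro rfl
      have h01 := h (show (0:ℝ) < 1 by norm_num)
      simp only [one_smul] at h01
      linarith
    have h0 : g • (0:ℝ) ≠ 0 := hfree g hg 0
    rcases lt_or_gt_of_ne h0 with hneg | hpos
    · -- g • x < x for all x
      have hall : ∀ x : ℝ, g • x < x := by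
        intro x
        simpa using holder_glob_lt hcont hfree (g := g) (h := 1) (by simpa using hneg) x
      have h1 : g • (g • (0:ℝ)) < g • 0 := hall _
      have h2 : g • (0:ℝ) < g • (g • (0:ℝ)) := h hneg
      linarith
    · have hall := holder_pos_all hcont hfree hpos
      have h1 : g • (0:ℝ) < g • (g • (0:ℝ)) := hall _
      have h2 : g • (g • (0:ℝ)) < g • (0:ℝ) := h hpos
      linarith

include hcont hfree in
lemma holder_le_pow_smul {g : G} (h : 0 < g • (0:ℝ)) (n : ℕ) (x : ℝ) :
    x ≤ (g ^ n) • x := by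
  induction n with
  | zero => simp
  | succ n ih =>
    calc x ≤ (g ^ n) • x := ih
    _ ≤ g • ((g ^ n) • x) := (holder_pos_all hcont hfree h _).le
    _ = (g ^ (n+1)) • x := by rw [smul_smul, ← pow_succ']

include hcont hfree in
lemma holder_zpow_mono {g : G} (h : 0 < g • (0:ℝ)) {m k : ℤ} (hmk : m ≤ k) (x : ℝ) :
    (g ^ m) • x ≤ (g ^ k) • x := by
  have : g ^ k = g ^ ((k - m).toNat : ℕ) * g ^ m := by
    rw [← zpow_natCast, Int.toNat_of_nonneg (by omega), ← zpow_add]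
    congr 1; omega
  rw [this, mul_smul]
  exact holder_le_pow_smul hcont hfree h _ _

include hcont hfree in
lemma holder_unbounded {g : G} (h : 0 < g • (0:ℝ)) (x y : ℝ) :
    ∃ n : ℕ, y < (g ^ n) • x := by
  by_contra hb
  push_neg at hb
  set u : ℕ → ℝ := fun n => (g ^ n) • x with hu
  have hum : Monotone u := by
    apply monotone_nat_of_le_succ
    intro n
    have : u n < g • u n := holder_pos_all hcont hfree h _
    calc u n ≤ g • u n := this.le
    _ = u (n+1) := by rw [hu, smul_smul, ← pow_succ']
  have hbdd : BddAbove (range u) := ⟨y, by rintro _ ⟨n, rfl⟩; exact hb n⟩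
  set L := ⨆ n, u n with hL
  have h1 : Tendsto u atTop (𝓝 L) := tendsto_atTop_ciSup hum hbdd
  have h2 : Tendsto (fun n => u (n + 1)) atTop (𝓝 L) := h1.comp (tendsto_add_atTop_nat 1)
  have h3 : Tendsto (fun n => g • u n) atTop (𝓝 (g • L)) := ((hcont g).tendsto L).comp h1
  have h4 : (fun n => g • u n) = fun n => u (n + 1) := by
    funext n; rw [hu]; simp only []; rw [smul_smul, ← pow_succ']
  rw [h4] at h3
  have h5 : g • L = L := tendsto_nhds_unique h3 h2
  have := holder_fix hfree h5
  rw [this] at h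
  simpa using h

include hcont hfree in
lemma holder_floor {f : G} (hf : 0 < f • (0:ℝ)) (y : ℝ) :
    ∃ m : ℤ, ((f ^ m) • (0:ℝ) ≤ y ∧ ∀ k : ℤ, (f ^ k) • (0:ℝ) ≤ y → k ≤ m) := by
  have hne : ∃ k : ℤ, (f ^ k) • (0:ℝ) ≤ y := by
    obtain ⟨n, hn⟩ := holder_unbounded hcont hfree hf y 0
    refine ⟨-(n:ℤ), ?_⟩
    have : (f ^ (-(n:ℤ))) • ((f ^ (n:ℤ)) • y) = y := by
      rw [smul_smul, ← zpow_add]; simp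
    calc (f ^ (-(n:ℤ))) • (0:ℝ) ≤ (f ^ (-(n:ℤ))) • ((f ^ (n:ℤ)) • y) := by
          apply (holder_mono hcont hfree (f ^ (-(n:ℤ)))).monotone
          rw [zpow_natCast]; exact hn.le
    _ = y := this
  have hbd : ∃ b : ℤ, ∀ z : ℤ, (f ^ z) • (0:ℝ) ≤ y → z ≤ b := by
    obtain ⟨n, hn⟩ := holder_unbounded hcont hfree hf 0 y
    refine ⟨(n:ℤ), ?_⟩
    intro z hz
    by_contra hzn
    push_neg at hzn
    have : (f ^ (n:ℤ)) • (0:ℝ) ≤ (f ^ z) • (0:ℝ) :=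
      holder_zpow_mono hcont hfree hf hzn.le 0
    rw [zpow_natCast] at this
    linarith
  obtain ⟨m, hm1, hm2⟩ := Int.exists_greatest_of_bdd
    (P := fun z => (f ^ z) • (0:ℝ) ≤ y) hbd hne
  exact ⟨m, hm1, hm2⟩

end HolderAux

section HolderComm

variable {G : Type*} [Group G] [MulAction G ℝ]
variable (hcont : ∀ g : G, Continuous (fun x : ℝ => g • x))
  (hfree : ∀ g : G, g ≠ 1 → ∀ x : ℝ, g • x ≠ x)

include hcont hfree in
lemma holder_comm (a b : G) : a * b = b * a := by
  by_contra hab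
  suffices H : ∀ p q : G, 0 < ((p * q) * (q * p)⁻¹) • (0:ℝ) → False by
    have hc1 : (a * b) * (b * a)⁻¹ ≠ 1 := by
      intro h; exact hab (by rwa [mul_inv_eq_one] at h)
    have hc0 : ((a * b) * (b * a)⁻¹) • (0:ℝ) ≠ 0 := hfree _ hc1 0
    rcases lt_or_gt_of_ne hc0 with hneg | hpos
    · apply H b a
      have hinv : (b * a) * (a * b)⁻¹ = (((a * b) * (b * a)⁻¹)⁻¹ : G) := by group
      rw [hinv]
      have h2 := (holder_mono hcont hfree ((a * b) * (b * a)⁻¹)⁻¹) hneg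
      simp only [] at h2
      rw [inv_smul_smul] at h2
      exact h2
    · exact H a b hpos
  intro p q hc
  set c := (p * q) * (q * p)⁻¹ with hcdef
  by_cases hδ : ∃ δ : G, 0 < δ • (0:ℝ) ∧ (δ * δ) • (0:ℝ) ≤ c • (0:ℝ)
  · -- Case A : Fuchs's contradiction
    obtain ⟨δ, hδpos, hδ2⟩ := hδ
    obtain ⟨m, hm1, hm2⟩ := holder_floor hcont hfree hδpos (p • (0:ℝ))
    obtain ⟨n, hn1, hn2⟩ := holder_floor hcont hfree hδpos (q • (0:ℝ))
    have hm3 : p • (0:ℝ) < (δ ^ (m+1)) • (0:ℝ) := by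
      by_contra h; push_neg at h; have := hm2 (m+1) h; omega
    have hn3 : q • (0:ℝ) < (δ ^ (n+1)) • (0:ℝ) := by
      by_contra h; push_neg at h; have := hn2 (n+1) h; omega
    -- (p*q) • 0 < δ^(m+n+2) • 0
    have step1 : (p * q) • (0:ℝ) < (δ ^ (m+n+2)) • (0:ℝ) := by
      have h1 : p • (q • (0:ℝ)) < (δ ^ (m+1)) • (q • (0:ℝ)) :=
        holder_glob_lt hcont hfree hm3 _
      have h2 : (δ ^ (m+1)) • (q • (0:ℝ)) < (δ ^ (m+1)) • ((δ ^ (n+1)) • (0:ℝ)) :=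
        (holder_mono hcont hfree (δ ^ (m+1))) hn3
      have h3 : (δ ^ (m+1)) • ((δ ^ (n+1)) • (0:ℝ)) = (δ ^ (m+n+2)) • (0:ℝ) := by
        rw [smul_smul]; congr 1; group
      rw [mul_smul]
      linarith
    -- δ^(m+n) • 0 ≤ (q*p) • 0
    have step2 : (δ ^ (m+n)) • (0:ℝ) ≤ (q * p) • (0:ℝ) := by
      have h1 : (δ ^ (m+n)) • (0:ℝ) = (δ ^ n) • ((δ ^ m) • (0:ℝ)) := by
        rw [smul_smul]; congr 1; group
      have h2 : (δ ^ n) • ((δ ^ m) • (0:ℝ)) ≤ (δ ^ n) • (p • (0:ℝ)) :=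
        (holder_mono hcont hfree (δ ^ n)).monotone hm1
      have h3 : (δ ^ n) • (p • (0:ℝ)) ≤ q • (p • (0:ℝ)) :=
        holder_glob_le hcont hfree hn1 _
      rw [mul_smul]
      linarith
    -- combine
    set w := (q * p)⁻¹ • (0:ℝ) with hw
    have hcw : c • (0:ℝ) = (p * q) • w := by rw [hcdef, mul_smul]
    have k1 : (p * q) • w < (δ ^ (m+n+2)) • w := holder_glob_lt hcont hfree step1 _
    have k2 : w ≤ (δ ^ (-(m+n))) • (0:ℝ) := by
      have h1 : ((q * p)⁻¹ * δ ^ (m+n)) • (0:ℝ) ≤ (0:ℝ) := by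
        have := (holder_mono hcont hfree (q * p)⁻¹).monotone step2
        simpa [mul_smul] using this
      have h2 := holder_glob_le hcont hfree (g := (q * p)⁻¹ * δ ^ (m+n)) (h := 1)
        (by simpa using h1) ((δ ^ (-(m+n))) • (0:ℝ))
      have h3 : ((q * p)⁻¹ * δ ^ (m+n)) • ((δ ^ (-(m+n))) • (0:ℝ)) = w := by
        rw [smul_smul, hw]; congr 1; group
      rw [h3] at h2
      simpa using h2
    have k3 : (δ ^ (m+n+2)) • w ≤ (δ ^ (m+n+2)) • ((δ ^ (-(m+n))) • (0:ℝ)) :=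
      (holder_mono hcont hfree (δ ^ (m+n+2))).monotone k2
    have k4 : (δ ^ (m+n+2)) • ((δ ^ (-(m+n))) • (0:ℝ)) = (δ * δ) • (0:ℝ) := by
      rw [smul_smul]; congr 1
      rw [← zpow_add, show (m+n+2 + -(m+n) : ℤ) = 2 by ring, zpow_two]
    rw [hcw] at hδ2
    linarith
  · -- Case B : c is a least positive element; the group is cyclic
    push_neg at hδ
    have hmin : ∀ δ : G, 0 < δ • (0:ℝ) → c • (0:ℝ) ≤ δ • (0:ℝ) := by
      intro δ hδp
      by_contra hlt; push_neg at hlt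
      set δ' := c * δ⁻¹ with hδ'
      have h1 : 0 < δ' • (0:ℝ) := by
        have := holder_glob_lt hcont hfree hlt (δ⁻¹ • (0:ℝ))
        simpa [hδ', mul_smul, smul_inv_smul] using this
      have h2 : δ' • (0:ℝ) < δ • (0:ℝ) := by
        have := holder_glob_lt hcont hfree (hδ δ hδp) (δ⁻¹ • (0:ℝ))
        simpa [hδ', mul_smul, smul_inv_smul] using this
      have h3 : (δ' * δ') • (0:ℝ) < c • (0:ℝ) := by
        have hmono := (holder_mono hcont hfree δ') h2
        have he : δ' • (δ • (0:ℝ)) = c • (0:ℝ) := by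
          rw [smul_smul]; congr 1; rw [hδ']; group
        rw [mul_smul]
        linarith
      exact absurd (hδ δ' h1) (not_lt.2 h3.le)
    have hcyc : ∀ u : G, ∃ m : ℤ, u = c ^ m := by
      intro u
      obtain ⟨m, hm1, hm2⟩ := holder_floor hcont hfree hc (u • (0:ℝ))
      have hm3 : u • (0:ℝ) < (c ^ (m+1)) • (0:ℝ) := by
        by_contra h; push_neg at h; have := hm2 (m+1) h; omega
      set e := u * (c ^ m)⁻¹ with he
      have he1 : (0:ℝ) ≤ e • (0:ℝ) := by
        have := holder_glob_le hcont hfree hm1 ((c ^ m)⁻¹ • (0:ℝ))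
        simpa [he, mul_smul, smul_inv_smul] using this
      have he2 : e • (0:ℝ) < c • (0:ℝ) := by
        have h4 := holder_glob_lt hcont hfree hm3 ((c ^ m)⁻¹ • (0:ℝ))
        have h5 : (c ^ (m+1)) • ((c ^ m)⁻¹ • (0:ℝ)) = c • (0:ℝ) := by
          rw [smul_smul]; congr 1; group
        rw [h5] at h4
        simpa [he, mul_smul] using h4
      rcases eq_or_lt_of_le he1 with heq | hpos'
      · have h6 : e = 1 := holder_fix hfree heq.symm
        refine ⟨m, ?_⟩
        have := congrArg (· * (c ^ m)) h6
        simpa [he, mul_assoc] using this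
      · exact absurd (hmin e hpos') (not_le.2 he2)
    obtain ⟨i, hi⟩ := hcyc p
    obtain ⟨j, hj⟩ := hcyc q
    have : c = 1 := by rw [hcdef, hi, hj]; group
    rw [this] at hc
    simpa using hc

end HolderComm

section HolderMain

variable {G : Type*} [Group G] [MulAction G ℝ]
variable (hcont : ∀ g : G, Continuous (fun x : ℝ => g • x))
  (hfree : ∀ g : G, g ≠ 1 → ∀ x : ℝ, g • x ≠ x)

include hcont hfree in
theorem holder_main : ∃ φ : G →* Multiplicative ℝ, Function.Injective φ := by
  by_cases htriv : ∀ g : G, g = 1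
  · exact ⟨1, fun a b _ => (htriv a).trans (htriv b).symm⟩
  push_neg at htriv
  obtain ⟨f₀, hf₀⟩ := htriv
  have hf0ne : f₀ • (0:ℝ) ≠ 0 := hfree f₀ hf₀ 0
  obtain ⟨f, hf⟩ : ∃ f : G, 0 < f • (0:ℝ) := by
    rcases lt_or_gt_of_ne hf0ne with hn | hp
    · refine ⟨f₀⁻¹, ?_⟩
      have h2 := (holder_mono hcont hfree f₀⁻¹) hn
      simp only [] at h2
      rwa [inv_smul_smul] at h2
    · exact ⟨f₀, hp⟩
  have hfloor : ∀ g : G, ∃ m : ℤ, (f ^ m) • (0:ℝ) ≤ g • (0:ℝ) ∧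
      ∀ k : ℤ, (f ^ k) • (0:ℝ) ≤ g • (0:ℝ) → k ≤ m :=
    fun g => holder_floor hcont hfree hf (g • 0)
  choose A hA1 hA2 using hfloor
  have hA3 : ∀ g : G, g • (0:ℝ) < (f ^ (A g + 1)) • (0:ℝ) := by
    intro g; by_contra h; push_neg at h
    have := hA2 g (A g + 1) h; omega
  have hchar : ∀ (g : G) (m : ℤ), m ≤ A g ↔ (f ^ m) • (0:ℝ) ≤ g • (0:ℝ) := by
    intro g m
    constructor
    · intro h
      exact le_trans (holder_zpow_mono hcont hfree hf h 0) (hA1 g)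
    · exact hA2 g m
  have hq1 : ∀ g h : G, A g + A h ≤ A (g * h) := by
    intro g h
    rw [hchar]
    calc (f ^ (A g + A h)) • (0:ℝ) = (f ^ (A g)) • ((f ^ (A h)) • (0:ℝ)) := by
          rw [smul_smul, ← zpow_add]
    _ ≤ (f ^ (A g)) • (h • (0:ℝ)) := (holder_mono hcont hfree _).monotone (hA1 h)
    _ ≤ g • (h • (0:ℝ)) := holder_glob_le hcont hfree (hA1 g) _
    _ = (g * h) • (0:ℝ) := (mul_smul g h 0).symm
  have hq2 : ∀ g h : G, A (g * h) ≤ A g + A h + 1 := by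
    intro g h
    by_contra hcon
    push_neg at hcon
    have h1 : (f ^ (A g + A h + 2)) • (0:ℝ) ≤ (g * h) • (0:ℝ) := (hchar _ _).1 (by omega)
    have h2 : (g * h) • (0:ℝ) < (f ^ (A g + A h + 2)) • (0:ℝ) := by
      calc (g * h) • (0:ℝ) = g • (h • (0:ℝ)) := mul_smul g h 0
      _ < (f ^ (A g + 1)) • (h • (0:ℝ)) := holder_glob_lt hcont hfree (hA3 g) _
      _ < (f ^ (A g + 1)) • ((f ^ (A h + 1)) • (0:ℝ)) :=
          (holder_mono hcont hfree _) (hA3 h)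
      _ = (f ^ (A g + A h + 2)) • (0:ℝ) := by
          rw [smul_smul, ← zpow_add, show (A g + 1 + (A h + 1) : ℤ) = A g + A h + 2 by ring]
    linarith
  have comm : ∀ a b : G, a * b = b * a := fun a b => holder_comm hcont hfree a b
  have hA1' : A 1 = 0 := by
    have h1 : (0:ℤ) ≤ A 1 := (hchar 1 0).2 (by simp)
    have h2 : A 1 < 1 := by
      by_contra h; push_neg at h
      have h3 := (hchar 1 1).1 h
      rw [zpow_one] at h3
      simp only [one_smul] at h3
      linarith
    omega
  have hsuper : ∀ (g : G) (n : ℕ), (n : ℤ) * A g ≤ A (g ^ n) := by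
    intro g n
    induction n with
    | zero => simp [hA1']
    | succ n ih =>
      have h1 := hq1 (g ^ n) g
      rw [← pow_succ] at h1
      have e : ((n:ℤ) + 1) * A g = (n:ℤ) * A g + A g := by ring
      push_cast
      linarith
  set u : G → ℕ → ℝ := fun g n => (A (g ^ n) : ℝ) + 1 with hu
  have hsub : ∀ g : G, Subadditive (u g) := by
    intro g m n
    have h1 := hq2 (g ^ m) (g ^ n)
    rw [← pow_add] at h1
    have h2 : (A (g ^ (m + n)) : ℝ) ≤ (A (g ^ m) : ℝ) + (A (g ^ n) : ℝ) + 1 := by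
      exact_mod_cast h1
    simp only [hu]
    linarith
  have hbddb : ∀ g : G, BddBelow (Set.range fun n : ℕ => u g n / n) := by
    intro g
    refine ⟨min 0 (A g : ℝ), ?_⟩
    rintro _ ⟨n, rfl⟩
    rcases Nat.eq_zero_or_pos n with rfl | hn
    · simp only [Nat.cast_zero, div_zero]
      exact min_le_left _ _
    · have hnpos : (0:ℝ) < n := by exact_mod_cast hn
      rw [le_div_iff₀ hnpos]
      have h1 := hsuper g n
      have h2 : ((n:ℝ)) * (A g : ℝ) ≤ (A (g ^ n) : ℝ) := by exact_mod_cast h1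
      have h3 : min 0 (A g : ℝ) * n ≤ (A g : ℝ) * n :=
        mul_le_mul_of_nonneg_right (min_le_right _ _) hnpos.le
      have h4 : (A (g ^ n) : ℝ) ≤ u g n := by simp [hu]
      nlinarith
  set φ₀ : G → ℝ := fun g => (hsub g).lim with hφ₀
  have htend : ∀ g : G, Filter.Tendsto (fun n : ℕ => (A (g ^ n) : ℝ) / n)
      Filter.atTop (nhds (φ₀ g)) := by
    intro g
    have h1 := (hsub g).tendsto_lim (hbddb g)
    have h2 : Filter.Tendsto (fun n : ℕ => u g n / n - 1 / n) Filter.atTop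
        (nhds ((hsub g).lim - 0)) := h1.sub tendsto_one_div_atTop_nhds_zero_nat
    rw [sub_zero] at h2
    refine h2.congr fun n => ?_
    simp only [hu]
    rw [div_sub_div_same, add_sub_cancel_right]
  have hadd : ∀ g h : G, φ₀ (g * h) = φ₀ g + φ₀ h := by
    intro g h
    have hcomm : Commute g h := comm g h
    have hpow : ∀ n : ℕ, (g * h) ^ n = g ^ n * h ^ n := fun n => hcomm.mul_pow n
    have hlow : ∀ n : ℕ, (A (g ^ n) : ℝ) / n + (A (h ^ n) : ℝ) / n ≤ (A ((g*h) ^ n) : ℝ) / n := by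
      intro n
      rcases Nat.eq_zero_or_pos n with rfl | hn
      · simp
      · have hnpos : (0:ℝ) < n := by exact_mod_cast hn
        rw [← add_div, div_le_div_iff_of_pos_right hnpos]
        have h1 := hq1 (g ^ n) (h ^ n)
        rw [← hpow n] at h1
        exact_mod_cast h1
    have hup : ∀ n : ℕ, (A ((g*h) ^ n) : ℝ) / n ≤
        (A (g ^ n) : ℝ) / n + (A (h ^ n) : ℝ) / n + 1 / n := by
      intro n
      rcases Nat.eq_zero_or_pos n with rfl | hn
      · simp
      · have hnpos : (0:ℝ) < n := by exact_mod_cast hn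
        rw [← add_div, ← add_div, div_le_div_iff_of_pos_right hnpos]
        have h1 := hq2 (g ^ n) (h ^ n)
        rw [← hpow n] at h1
        exact_mod_cast h1
    have hlim1 : Filter.Tendsto (fun n : ℕ => (A (g ^ n) : ℝ) / n + (A (h ^ n) : ℝ) / n)
        Filter.atTop (nhds (φ₀ g + φ₀ h)) := (htend g).add (htend h)
    have hlim2 : Filter.Tendsto
        (fun n : ℕ => (A (g ^ n) : ℝ) / n + (A (h ^ n) : ℝ) / n + 1 / n)
        Filter.atTop (nhds (φ₀ g + φ₀ h + 0)) :=
      hlim1.add tendsto_one_div_atTop_nhds_zero_nat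
    rw [add_zero] at hlim2
    have hsq : Filter.Tendsto (fun n : ℕ => (A ((g*h) ^ n) : ℝ) / n)
        Filter.atTop (nhds (φ₀ g + φ₀ h)) :=
      tendsto_of_tendsto_of_tendsto_of_le_of_le hlim1 hlim2 hlow hup
    exact tendsto_nhds_unique (htend (g*h)) hsq
  have hone : φ₀ 1 = 0 := by
    have h1 : Filter.Tendsto (fun n : ℕ => (A ((1:G) ^ n) : ℝ) / n)
        Filter.atTop (nhds 0) := by
      have : (fun n : ℕ => (A ((1:G) ^ n) : ℝ) / n) = fun _ => (0:ℝ) := by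
        funext n; rw [one_pow, hA1']; simp
      rw [this]
      exact tendsto_const_nhds
    exact tendsto_nhds_unique (htend 1) h1
  have hinv : ∀ g : G, φ₀ g⁻¹ = - φ₀ g := by
    intro g
    have h1 := hadd g g⁻¹
    rw [mul_inv_cancel, hone] at h1
    linarith
  have hpos : ∀ g : G, 0 < g • (0:ℝ) → 0 < φ₀ g := by
    intro g hg
    obtain ⟨k, hk⟩ := holder_unbounded hcont hfree hg 0 (f • (0:ℝ))
    have hk0 : k ≠ 0 := by
      rintro rfl
      rw [pow_zero, one_smul] at hk
      linarith
    have hAk : 1 ≤ A (g ^ k) := by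
      rw [hchar, zpow_one]
      exact hk.le
    have hmul : Filter.Tendsto (fun n : ℕ => k * n) Filter.atTop Filter.atTop :=
      Filter.tendsto_atTop_atTop.2 fun b =>
        ⟨b, fun a ha => le_trans ha (Nat.le_mul_of_pos_left a (Nat.pos_of_ne_zero hk0))⟩
    have hsubseq : Filter.Tendsto (fun n : ℕ => (A (g ^ (k*n)) : ℝ) / (k*n : ℕ))
        Filter.atTop (nhds (φ₀ g)) := (htend g).comp hmul
    have hge : ∀ᶠ n : ℕ in Filter.atTop,
        1 / (k:ℝ) ≤ (A (g ^ (k*n)) : ℝ) / (k*n : ℕ) := by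
      filter_upwards [Filter.eventually_ge_atTop 1] with n hn
      have h2 := hsuper (g ^ k) n
      rw [← pow_mul] at h2
      have h3 : (n : ℤ) ≤ A (g ^ (k * n)) := by nlinarith [hAk, Int.ofNat_nonneg n]
      have hkpos : (0:ℝ) < k := by
        exact_mod_cast Nat.pos_of_ne_zero hk0
      have hnpos : (0:ℝ) < n := by exact_mod_cast hn
      have hknpos : (0:ℝ) < ((k*n : ℕ) : ℝ) := by positivity
      have h4 : ((n:ℝ)) ≤ (A (g ^ (k*n)) : ℝ) := by exact_mod_cast h3
      rw [div_le_div_iff₀ hkpos hknpos]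
      push_cast
      nlinarith
    have h5 : 1 / (k:ℝ) ≤ φ₀ g := ge_of_tendsto hsubseq hge
    have h6 : (0:ℝ) < 1 / (k:ℝ) := by
      have : (0:ℝ) < k := by exact_mod_cast Nat.pos_of_ne_zero hk0
      positivity
    linarith
  refine ⟨{ toFun := fun g => Multiplicative.ofAdd (φ₀ g),
            map_one' := by
              show Multiplicative.ofAdd (φ₀ 1) = 1
              rw [hone]; rfl,
            map_mul' := fun g h => by
              show Multiplicative.ofAdd (φ₀ (g * h)) =
                Multiplicative.ofAdd (φ₀ g) * Multiplicative.ofAdd (φ₀ h)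
              rw [hadd g h]; rfl }, ?_⟩
  rw [injective_iff_map_eq_one]
  intro g hg1
  have hg0 : φ₀ g = 0 := by simpa using hg1
  by_contra hg
  have hne : g • (0:ℝ) ≠ 0 := hfree g hg 0
  rcases lt_or_gt_of_ne hne with hn | hp
  · have h2 : 0 < g⁻¹ • (0:ℝ) := by
      have h3 := (holder_mono hcont hfree g⁻¹) hn
      simp only [] at h3
      rwa [inv_smul_smul] at h3
    have h4 := hpos g⁻¹ h2
    rw [hinv g, hg0] at h4
    linarith
  · have h4 := hpos g hp
    rw [hg0] at h4
    linarith

end HolderMain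


/-- Hölder's theorem: a group acting freely on ℝ by homeomorphisms embeds in `(ℝ, +)`
(written multiplicatively as `Multiplicative ℝ`); in particular it is abelian and
torsion-free. -/
theorem holder_embedding (G : Type*) [Group G] [MulAction G ℝ]
    (hcont : ∀ g : G, Continuous (fun x : ℝ => g • x))
    (hfree : ∀ g : G, g ≠ 1 → ∀ x : ℝ, g • x ≠ x) :
    ∃ φ : G →* Multiplicative ℝ, Function.Injective φ := by
  exact holder_main hcont hfree
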